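/- With the notation of the previous claim (r_x the piecewise linear map built from the cocycle m_x and the functions i_x, j_x), for every x ∈ 𝐗, t ∈ ℝ, and p ∈ ℤ one has r_x(t + p) = r_{τ^p(x)}(t) + m_x(p). -/

import Mathlib

/-- The one-sided shift map on `ℕ → A`. -/
def shift {A : Type*} (x : ℕ → A) : ℕ → A := fun n => x (n + 1)

/-- The one-sided tail `x_{[i,∞)}` of a two-sided sequence. -/
def tail {A : Type*} (x : ℤ → A) (i : ℤ) : ℕ → A := fun m => x (i + m)

/-- The `i`-th power (for `i : ℤ`) of the two-sided shift `τ`. -/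
def tshiftZ {A : Type*} (i : ℤ) (x : ℤ → A) : ℤ → A := fun m => x (m + i)

/-- The two-sided shift space associated to a one-sided shift space `X`. -/
def TwoSided {A : Type*} (X : Set (ℕ → A)) : Set (ℤ → A) :=
  {x | ∀ m : ℤ, tail x m ∈ X}

/-- The partial-sum cocycle `m_x(j)` built from `n : X → ℕ₀` along `x`. -/
def mcoc {A : Type*} (n : (ℕ → A) → ℕ) (x : ℤ → A) (j : ℤ) : ℤ :=
  if 0 ≤ j then ∑ i ∈ Finset.range j.toNat, (n (tail x (i : ℤ)) : ℤ)
  else -∑ i ∈ Finset.range (-j).toNat, (n (tail x (-(i : ℤ) - 1)) : ℤ)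

/-- `i_x(t)`: the largest `i ≤ t` with `n(x_{[i,∞)}) ≠ 0`. -/
noncomputable def ixt {A : Type*} (n : (ℕ → A) → ℕ) (x : ℤ → A) (t : ℝ) : ℤ :=
  sSup {i : ℤ | (i : ℝ) ≤ t ∧ n (tail x i) ≠ 0}

/-- `j_x(t)`: the smallest `j > t` with `n(x_{[j,∞)}) ≠ 0`. -/
noncomputable def jxt {A : Type*} (n : (ℕ → A) → ℕ) (x : ℤ → A) (t : ℝ) : ℤ :=
  sInf {j : ℤ | t < (j : ℝ) ∧ n (tail x j) ≠ 0}

/-- The piecewise-linear interpolation `r_x : ℝ → ℝ` of the cocycle `m_x`. -/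
noncomputable def rfun {A : Type*} (n : (ℕ → A) → ℕ) (x : ℤ → A) (t : ℝ) : ℝ :=
  (mcoc n x (ixt n x t) : ℝ) +
    ((t - (ixt n x t : ℝ)) / ((jxt n x t : ℝ) - (ixt n x t : ℝ))) *
      (n (tail x (ixt n x t)) : ℝ)

lemma tail_tshift {A : Type*} (x : ℤ → A) (p i : ℤ) :
    tail (tshiftZ p x) i = tail x (i + p) := by
  funext m
  show x (i + m + p) = x (i + p + m)
  congr 1; ring

lemma mcoc_succ {A : Type*} (n : (ℕ → A) → ℕ) (x : ℤ → A) (j : ℤ) :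
    mcoc n x (j + 1) = mcoc n x j + n (tail x j) := by
  rcases le_or_gt 0 j with hj | hj
  · rw [mcoc, mcoc, if_pos (by omega), if_pos hj]
    have h1 : (j + 1).toNat = j.toNat + 1 := by omega
    rw [h1, Finset.sum_range_succ, Int.toNat_of_nonneg hj]
  · have key : mcoc n x (j + 1)
        = -∑ i ∈ Finset.range (-(j+1)).toNat, (n (tail x (-(i : ℤ) - 1)) : ℤ) := by
      rcases eq_or_lt_of_le (show j + 1 ≤ 0 by omega) with h | h
      · rw [mcoc, if_pos (by omega), show (j + 1).toNat = 0 by omega,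
            show (-(j+1)).toNat = 0 by omega]
        simp
      · rw [mcoc, if_neg (by omega)]
    rw [key, mcoc, if_neg (by omega)]
    have h3 : (-j).toNat = (-(j+1)).toNat + 1 := by omega
    rw [h3, Finset.sum_range_succ]
    have h4 : (-(((-(j+1)).toNat : ℤ))) - 1 = j := by omega
    rw [h4]
    ring

lemma mcoc_cocycle {A : Type*} (n : (ℕ → A) → ℕ) (x : ℤ → A) (p a : ℤ) :
    mcoc n x (a + p) = mcoc n x p + mcoc n (tshiftZ p x) a := by
  induction a using Int.induction_on with
  | zero => simp [mcoc]
  | succ k ih =>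
    have h1 := mcoc_succ n x (k + p)
    have h2 := mcoc_succ n (tshiftZ p x) k
    rw [tail_tshift] at h2
    rw [show ((k : ℤ) + 1 + p) = (k + p) + 1 by ring, h1, ih, h2]
    ring
  | pred k ih =>
    have h1 := mcoc_succ n x (-(k : ℤ) - 1 + p)
    have h2 := mcoc_succ n (tshiftZ p x) (-(k : ℤ) - 1)
    rw [show (-(k : ℤ) - 1 + p + 1) = -(k : ℤ) + p by ring] at h1
    rw [show (-(k : ℤ) - 1 + 1) = -(k : ℤ) by ring, tail_tshift] at h2
    omega

lemma int_sSup_image_add (S : Set ℤ) (p : ℤ) (hne : S.Nonempty) (hbdd : BddAbove S) :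
    sSup ((fun i => i + p) '' S) = sSup S + p := by
  obtain ⟨b, hb⟩ := hbdd
  have hbdd' : BddAbove ((fun i => i + p) '' S) := by
    refine ⟨b + p, ?_⟩
    rintro _ ⟨i, hi, rfl⟩
    exact (add_le_add_iff_right p).2 (hb hi)
  apply le_antisymm
  · apply csSup_le (hne.image _)
    rintro _ ⟨i, hi, rfl⟩
    exact (add_le_add_iff_right p).2 (le_csSup ⟨b, hb⟩ hi)
  · exact le_csSup hbdd' ⟨sSup S, Int.csSup_mem hne ⟨b, hb⟩, rfl⟩

lemma int_sInf_image_add (S : Set ℤ) (p : ℤ) (hne : S.Nonempty) (hbdd : BddBelow S) :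
    sInf ((fun i => i + p) '' S) = sInf S + p := by
  obtain ⟨b, hb⟩ := hbdd
  have hbdd' : BddBelow ((fun i => i + p) '' S) := by
    refine ⟨b + p, ?_⟩
    rintro _ ⟨i, hi, rfl⟩
    exact (add_le_add_iff_right p).2 (hb hi)
  apply le_antisymm
  · exact csInf_le hbdd' ⟨sInf S, Int.csInf_mem hne ⟨b, hb⟩, rfl⟩
  · apply le_csInf (hne.image _)
    rintro _ ⟨i, hi, rfl⟩
    exact (add_le_add_iff_right p).2 (csInf_le ⟨b, hb⟩ hi)

/-- For all `x ∈ 𝐗`, `t ∈ ℝ`, `p ∈ ℤ`: `r_x(t + p) = r_{τ^p(x)}(t) + m_x(p)`. -/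
theorem stmt11 {A : Type*} [Fintype A] [TopologicalSpace A] [DiscreteTopology A]
    (X : Set (ℕ → A)) (hcl : IsClosed X) (hinv : shift '' X = X)
    (n : (ℕ → A) → ℕ)
    (hcof : ∀ x ∈ TwoSided X, ∀ i₀ : ℤ,
      (∃ i : ℤ, i < i₀ ∧ n (tail x i) ≠ 0) ∧ (∃ j : ℤ, i₀ < j ∧ n (tail x j) ≠ 0)) :
    ∀ x ∈ TwoSided X, ∀ t : ℝ, ∀ p : ℤ,
      rfun n x (t + (p : ℝ)) = rfun n (tshiftZ p x) t + (mcoc n x p : ℝ) := by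
  intro x hx t p
  set x' := tshiftZ p x with hx'def
  have hx' : x' ∈ TwoSided X := by
    intro m
    rw [hx'def, tail_tshift]
    exact hx (m + p)
  set S : Set ℤ := {i : ℤ | (i : ℝ) ≤ t ∧ n (tail x' i) ≠ 0} with hS
  set T : Set ℤ := {j : ℤ | t < (j : ℝ) ∧ n (tail x' j) ≠ 0} with hT
  have hSne : S.Nonempty := by
    obtain ⟨i, hi, hni⟩ := (hcof x' hx' ⌊t⌋).1
    exact ⟨i, le_trans (by exact_mod_cast (hi.le : i ≤ ⌊t⌋)) (Int.floor_le t), hni⟩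
  have hSbdd : BddAbove S := by
    refine ⟨⌈t⌉, fun i hi => ?_⟩
    exact_mod_cast le_trans hi.1 (Int.le_ceil t)
  have hTne : T.Nonempty := by
    obtain ⟨j, hj, hnj⟩ := (hcof x' hx' ⌈t⌉).2
    exact ⟨j, lt_of_le_of_lt (Int.le_ceil t) (by exact_mod_cast hj), hnj⟩
  have hTbdd : BddBelow T := by
    refine ⟨⌊t⌋, fun j hj => ?_⟩
    have : (⌊t⌋ : ℝ) < j := lt_of_le_of_lt (Int.floor_le t) hj.1
    exact_mod_cast this.le
  have hSeq : {i : ℤ | (i : ℝ) ≤ t + (p : ℝ) ∧ n (tail x i) ≠ 0} = (fun i => i + p) '' S := by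
    ext i
    constructor
    · rintro ⟨h1, h2⟩
      refine ⟨i - p, ⟨by push_cast; linarith, ?_⟩, by ring⟩
      rw [tail_tshift, sub_add_cancel]; exact h2
    · rintro ⟨i₀, ⟨h1, h2⟩, rfl⟩
      rw [tail_tshift] at h2
      exact ⟨by push_cast; linarith, h2⟩
  have hTeq : {j : ℤ | t + (p : ℝ) < (j : ℝ) ∧ n (tail x j) ≠ 0} = (fun i => i + p) '' T := by
    ext j
    constructor
    · rintro ⟨h1, h2⟩
      refine ⟨j - p, ⟨by push_cast; linarith, ?_⟩, by ring⟩
      rw [tail_tshift, sub_add_cancel]; exact h2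
    · rintro ⟨j₀, ⟨h1, h2⟩, rfl⟩
      rw [tail_tshift] at h2
      exact ⟨by push_cast; linarith, h2⟩
  have hI : ixt n x (t + (p : ℝ)) = ixt n x' t + p := by
    rw [ixt, ixt, hSeq, int_sSup_image_add S p hSne hSbdd]
  have hJ : jxt n x (t + (p : ℝ)) = jxt n x' t + p := by
    rw [jxt, jxt, hTeq, int_sInf_image_add T p hTne hTbdd]
  set I := ixt n x' t
  set J := jxt n x' t
  have hm : mcoc n x (I + p) = mcoc n x p + mcoc n x' I := mcoc_cocycle n x p I
  have htl : tail x (I + p) = tail x' I := (tail_tshift x p I).symm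
  rw [rfun, rfun, hI, hJ, hm, htl]
  push_cast
  have hd : (J : ℝ) + p - ((I : ℝ) + p) = (J : ℝ) - I := by ring
  have hnum : t + (p : ℝ) - ((I : ℝ) + p) = t - I := by ring
  rw [hnum, hd]
  ring
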